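/- Substitution system on an initial algebra: let (H,θ) be a signature on a category C with coproducts, suppose [C,C] has an initial (Id + H)-algebra (T, α) = (μ(Id+H), in), and suppose that for every pointed endofunctor (Z,e), the precomposition functor −·Z : [C,C] → [C,C] has a right adjoint. Then (T, α) is a heterogeneous substitution system for (H,θ): for every pointed morphism f : (Z,e) → (T,η) there is a unique ⦃f⦄ : T·Z → T satisfying ⦃f⦄ ∘ η·Z = f and ⦃f⦄ ∘ τ·Z = τ ∘ H⦃f⦄ ∘ θ_{T,(Z,e)}. -/

import Mathlib

open CategoryTheory Limits

universe v u

/-- A pointed endofunctor on `C`. -/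
structure Ptd (C : Type u) [Category.{v} C] where
  Z : C ⥤ C
  e : 𝟭 C ⟶ Z

/-- A *signature* over `C`: an endofunctor `H` on the endofunctor category `[C,C]`
together with a strength `θ : (H −)·U∼ ⟶ H (−·U∼)`, natural in both variables and
satisfying the unit and composition coherence laws (here `X·Z` is the composite
`Z ⋙ X`, i.e. `A ↦ X (Z A)`). -/
structure Signature (C : Type u) [Category.{v} C] where
  H : (C ⥤ C) ⥤ (C ⥤ C)
  θ : ∀ (X : C ⥤ C) (Z : Ptd C), (Z.Z ⋙ H.obj X) ⟶ H.obj (Z.Z ⋙ X)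
  θ_nat_X : ∀ {X X' : C ⥤ C} (α : X ⟶ X') (Z : Ptd C),
      Functor.whiskerLeft Z.Z (H.map α) ≫ θ X' Z = θ X Z ≫ H.map (Functor.whiskerLeft Z.Z α)
  θ_nat_Z : ∀ (X : C ⥤ C) {Z Z' : Ptd C} (g : Z.Z ⟶ Z'.Z), Z.e ≫ g = Z'.e →
      Functor.whiskerRight g (H.obj X) ≫ θ X Z' = θ X Z ≫ H.map (Functor.whiskerRight g X)
  θ_id : ∀ X : C ⥤ C,
      θ X ⟨𝟭 C, 𝟙 (𝟭 C)⟩ =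
        (Functor.leftUnitor (H.obj X)).hom ≫ H.map (Functor.leftUnitor X).inv
  θ_comp : ∀ (X : C ⥤ C) (Z Z' : Ptd C),
      θ X ⟨Z.Z ⋙ Z'.Z, Z.e ≫ Functor.whiskerLeft Z.Z Z'.e⟩ =
        (Functor.associator Z.Z Z'.Z (H.obj X)).hom ≫
          Functor.whiskerLeft Z.Z (θ X Z') ≫ θ (Z'.Z ⋙ X) Z ≫
          H.map (Functor.associator Z.Z Z'.Z X).inv

variable {C : Type u} [Category.{v} C]

/-- A *heterogeneous substitution system* for a signature `(H, θ)`: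
an `(Id + H)`-algebra, presented by its components `η : Id ⟶ T` and `τ : H T ⟶ T`,
together with, for every morphism of pointed endofunctors `f : (Z,e) ⟶ (T,η)`,
a unique bracket `⦃f⦄ : T·Z ⟶ T` satisfying the two substitution equations. -/
structure HSS (S : Signature C) where
  T : C ⥤ C
  η : 𝟭 C ⟶ T
  τ : S.H.obj T ⟶ T
  bracket : ∀ (Z : Ptd C) (f : Z.Z ⟶ T), Z.e ≫ f = η → (Z.Z ⋙ T ⟶ T)
  bracket_η : ∀ (Z : Ptd C) (f : Z.Z ⟶ T) (hf : Z.e ≫ f = η),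
      Functor.whiskerLeft Z.Z η ≫ bracket Z f hf = f
  bracket_τ : ∀ (Z : Ptd C) (f : Z.Z ⟶ T) (hf : Z.e ≫ f = η),
      Functor.whiskerLeft Z.Z τ ≫ bracket Z f hf = S.θ T Z ≫ S.H.map (bracket Z f hf) ≫ τ
  bracket_unique : ∀ (Z : Ptd C) (f : Z.Z ⟶ T) (hf : Z.e ≫ f = η)
      (h : Z.Z ⋙ T ⟶ T),
      Functor.whiskerLeft Z.Z η ≫ h = f →
      Functor.whiskerLeft Z.Z τ ≫ h = S.θ T Z ≫ S.H.map h ≫ τ →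
      h = bracket Z f hf

variable [Limits.HasBinaryCoproducts C]

/-- The endofunctor `Id + H` on `[C,C]` (using pointwise coproducts). -/
noncomputable def IdPlusH (S : Signature C) : (C ⥤ C) ⥤ (C ⥤ C) where
  obj X := Limits.coprod (𝟭 C) (S.H.obj X)
  map f := Limits.coprod.map (𝟙 (𝟭 C)) (S.H.map f)
  map_id := by intros; simp
  map_comp := by intros; simp

/-- **Substitution system on an initial algebra** (Matthes–Uustalu, Thm. 15):
if `[C,C]` has an initial `(Id + H)`-algebra `(T, α)` and for every pointed
endofunctor `(Z,e)` the precomposition functor `−·Z : [C,C] ⥤ [C,C]` has a right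
adjoint, then `(T, α)` is a heterogeneous substitution system for `(H,θ)`:
with `η := inl ≫ α` and `τ := inr ≫ α`, for every pointed morphism
`f : (Z,e) ⟶ (T,η)` there is a unique `⦃f⦄ : T·Z ⟶ T` with `⦃f⦄ ∘ η·Z = f` and
`⦃f⦄ ∘ τ·Z = τ ∘ H ⦃f⦄ ∘ θ_{T,(Z,e)}`. -/
theorem initial_algebra_hss (S : Signature C)
    (A : Endofunctor.Algebra (IdPlusH S)) (hA : Limits.IsInitial A)
    (hadj : ∀ Z : Ptd C, ∃ R : (C ⥤ C) ⥤ (C ⥤ C),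
      Nonempty (((Functor.whiskeringLeft C C C).obj Z.Z) ⊣ R))
    (η : 𝟭 C ⟶ A.a) (hη : η = Limits.coprod.inl ≫ A.str)
    (τ : S.H.obj A.a ⟶ A.a) (hτ : τ = Limits.coprod.inr ≫ A.str) :
    ∀ (Z : Ptd C) (f : Z.Z ⟶ A.a), Z.e ≫ f = η →
      ∃! h : Z.Z ⋙ A.a ⟶ A.a,
        Functor.whiskerLeft Z.Z η ≫ h = f ∧
        Functor.whiskerLeft Z.Z τ ≫ h = S.θ A.a Z ≫ S.H.map h ≫ τ := by
  intro Z f _hf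
  obtain ⟨R, ⟨adj⟩⟩ := hadj Z
  have hL : ∀ {X Y : C ⥤ C} (p : X ⟶ Y),
      ((Functor.whiskeringLeft C C C).obj Z.Z).map p = Functor.whiskerLeft Z.Z p := fun _ => rfl
  let g₁ : 𝟭 C ⟶ R.obj A.a := (adj.homEquiv (𝟭 C) A.a) f
  let g₂ : S.H.obj (R.obj A.a) ⟶ R.obj A.a :=
    (adj.homEquiv _ _) (S.θ (R.obj A.a) Z ≫ S.H.map (adj.counit.app A.a) ≫ τ)
  let B : Endofunctor.Algebra (IdPlusH S) := ⟨R.obj A.a, coprod.desc g₁ g₂⟩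
  let k := hA.to B
  have hk : (IdPlusH S).map k.f ≫ B.str = A.str ≫ k.f := k.h
  have hmap : ∀ (X Y : C ⥤ C) (p : X ⟶ Y),
      (IdPlusH S).map p = coprod.map (𝟙 (𝟭 C)) (S.H.map p) := fun _ _ _ => rfl
  have hk1 : η ≫ k.f = g₁ := by
    have : coprod.inl ≫ coprod.map (𝟙 (𝟭 C)) (S.H.map k.f) ≫ (coprod.desc g₁ g₂ : 𝟭 C ⨿ S.H.obj (R.obj A.a) ⟶ R.obj A.a)
        = coprod.inl ≫ A.str ≫ k.f := coprod.inl ≫= hk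
    rw [coprod.inl_map_assoc, coprod.inl_desc, Category.id_comp] at this
    rw [hη]; exact (Category.assoc _ _ _).trans this.symm
  have hk2 : τ ≫ k.f = S.H.map k.f ≫ g₂ := by
    have : coprod.inr ≫ coprod.map (𝟙 (𝟭 C)) (S.H.map k.f) ≫ (coprod.desc g₁ g₂ : 𝟭 C ⨿ S.H.obj (R.obj A.a) ⟶ R.obj A.a)
        = coprod.inr ≫ A.str ≫ k.f := coprod.inr ≫= hk
    rw [coprod.inr_map_assoc, coprod.inr_desc] at this
    rw [hτ]; exact (Category.assoc _ _ _).trans this.symm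
  have hc : (adj.homEquiv A.a A.a).symm k.f
      = Functor.whiskerLeft Z.Z k.f ≫ adj.counit.app A.a := by
    rw [adj.homEquiv_counit, hL]
  refine ⟨(adj.homEquiv A.a A.a).symm k.f, ⟨?_, ?_⟩, ?_⟩
  · -- unit law
    have := congrArg (adj.homEquiv (𝟭 C) A.a).symm hk1
    rw [Adjunction.homEquiv_naturality_left_symm, Equiv.symm_apply_apply] at this
    rw [hL] at this
    exact this
  · -- tau law
    have := congrArg (adj.homEquiv _ A.a).symm hk2
    rw [Adjunction.homEquiv_naturality_left_symm,
        Adjunction.homEquiv_naturality_left_symm, Equiv.symm_apply_apply] at this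
    simp only [hL] at this
    rw [this, ← Category.assoc, S.θ_nat_X k.f Z, Category.assoc,
        ← S.H.map_comp_assoc, ← hc]
  · -- uniqueness
    intro h ⟨h1, h2⟩
    have hc2 : Functor.whiskerLeft Z.Z ((adj.homEquiv A.a A.a) h) ≫ adj.counit.app A.a
        = h := by
      have := (adj.homEquiv A.a A.a).symm_apply_apply h
      rw [adj.homEquiv_counit] at this
      exact this
    have key : (adj.homEquiv A.a A.a) h = k.f := by
      let K : A ⟶ B := ⟨(adj.homEquiv A.a A.a) h, ?_⟩
      · exact congrArg Endofunctor.Algebra.Hom.f (hA.hom_ext K (hA.to B))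
      · rw [hmap]
        show coprod.map (𝟙 (𝟭 C)) (S.H.map ((adj.homEquiv A.a A.a) h)) ≫
          (coprod.desc g₁ g₂ : 𝟭 C ⨿ S.H.obj (R.obj A.a) ⟶ R.obj A.a) = A.str ≫ (adj.homEquiv A.a A.a) h
        apply coprod.hom_ext
        · rw [coprod.inl_map_assoc, coprod.inl_desc, Category.id_comp]
          refine (?_ : g₁ = η ≫ (adj.homEquiv A.a A.a) h).trans
            (by subst hη; exact Category.assoc _ _ _)
          apply (adj.homEquiv _ _).symm.injective
          rw [Adjunction.homEquiv_naturality_left_symm,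
              Equiv.symm_apply_apply, Equiv.symm_apply_apply]
          rw [hL]
          exact h1.symm
        · rw [coprod.inr_map_assoc, coprod.inr_desc]
          refine (?_ : S.H.map ((adj.homEquiv A.a A.a) h) ≫ g₂ = τ ≫ (adj.homEquiv A.a A.a) h).trans
            (by subst hτ; exact Category.assoc _ _ _)
          apply (adj.homEquiv _ _).symm.injective
          rw [Adjunction.homEquiv_naturality_left_symm,
              Adjunction.homEquiv_naturality_left_symm,
              Equiv.symm_apply_apply, Equiv.symm_apply_apply]
          simp only [hL]
          rw [← Category.assoc, S.θ_nat_X _ Z, Category.assoc,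
              ← S.H.map_comp_assoc, hc2, h2]
    calc h = (adj.homEquiv A.a A.a).symm ((adj.homEquiv A.a A.a) h) :=
            ((adj.homEquiv A.a A.a).symm_apply_apply h).symm
      _ = (adj.homEquiv A.a A.a).symm k.f := by rw [key]
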